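/- Let K ⊆ ℝ² be a convex set. The function p ↦ dist(p, Kᶜ) (distance to the complement of K) is concave on K. -/

import Mathlib

theorem stmt_4 (K : Set (EuclideanSpace ℝ (Fin 2)))
    (hconv : Convex ℝ K) (hne : Kᶜ.Nonempty) :
    ∀ p ∈ K, ∀ q ∈ K, ∀ t : ℝ, t ∈ Set.Icc (0 : ℝ) 1 →
      t * Metric.infDist p Kᶜ + (1 - t) * Metric.infDist q Kᶜ ≤
        Metric.infDist (t • p + (1 - t) • q) Kᶜ := by
  intro p hp q hq t ht
  obtain ⟨ht0, ht1⟩ := ht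
  set r1 := Metric.infDist p Kᶜ with hr1
  set r2 := Metric.infDist q Kᶜ with hr2
  have r1nn : 0 ≤ r1 := Metric.infDist_nonneg
  have r2nn : 0 ≤ r2 := Metric.infDist_nonneg
  set D := t * r1 + (1 - t) * r2 with hDdef
  have hDnn : 0 ≤ D := add_nonneg (mul_nonneg ht0 r1nn)
    (mul_nonneg (by linarith) r2nn)
  rcases eq_or_lt_of_le hDnn with hD | hD
  · rw [← hD]; exact Metric.infDist_nonneg
  · have hDne : D ≠ 0 := ne_of_gt hD
    rw [Metric.infDist_eq_iInf]
    haveI := hne.to_subtype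
    refine le_ciInf fun ⟨y, hy⟩ => ?_
    by_contra hlt
    push_neg at hlt
    set z := t • p + (1 - t) • q with hz
    set v := y - z with hvdef
    have hv : ‖v‖ < D := by
      rw [hvdef, ← dist_eq_norm, dist_comm]
      exact hlt
    set a := (r1 / D) • v with ha
    set b := (r2 / D) • v with hb
    have key : t • a + (1 - t) • b = v := by
      rw [ha, hb, smul_smul, smul_smul, ← add_smul,
        show t * (r1 / D) + (1 - t) * (r2 / D) = 1 by field_simp; linarith [hDdef]]
      exact one_smul _ _
    have hya : y = t • (p + a) + (1 - t) • (q + b) := by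
      have : y = z + v := by rw [hvdef]; abel
      rw [this, hz]
      rw [smul_add, smul_add]
      rw [← key]
      abel
    have hpa : p + a ∈ K := by
      rcases eq_or_lt_of_le r1nn with h0 | h0
      · have : a = 0 := by rw [ha, ← h0]; simp
        rw [this, add_zero]; exact hp
      · by_contra hcon
        have h1 : r1 ≤ dist p (p + a) := Metric.infDist_le_dist_of_mem hcon
        have h2 : dist p (p + a) = (r1 / D) * ‖v‖ := by
          rw [dist_eq_norm, show p - (p + a) = -a by abel, norm_neg, ha,
            norm_smul, Real.norm_eq_abs, abs_of_nonneg (div_nonneg r1nn hDnn)]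
        have h3 : (r1 / D) * ‖v‖ < (r1 / D) * D :=
          mul_lt_mul_of_pos_left hv (div_pos h0 hD)
        rw [div_mul_cancel₀ _ hDne] at h3
        linarith [h1, h2 ▸ h1]
    have hqb : q + b ∈ K := by
      rcases eq_or_lt_of_le r2nn with h0 | h0
      · have : b = 0 := by rw [hb, ← h0]; simp
        rw [this, add_zero]; exact hq
      · by_contra hcon
        have h1 : r2 ≤ dist q (q + b) := Metric.infDist_le_dist_of_mem hcon
        have h2 : dist q (q + b) = (r2 / D) * ‖v‖ := by
          rw [dist_eq_norm, show q - (q + b) = -b by abel, norm_neg, hb,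
            norm_smul, Real.norm_eq_abs, abs_of_nonneg (div_nonneg r2nn hDnn)]
        have h3 : (r2 / D) * ‖v‖ < (r2 / D) * D :=
          mul_lt_mul_of_pos_left hv (div_pos h0 hD)
        rw [div_mul_cancel₀ _ hDne] at h3
        linarith [h2 ▸ h1]
    have : y ∈ K := by
      rw [hya]
      exact hconv hpa hqb ht0 (by linarith) (by ring)
    exact hy this
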